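/- Let M_n be the solution of M_n'(w) = 1 - M_n(w)^{2/n}, M_n(0) = 0, and Q_n(w) = (e^{2w/n} - 1)/(e^{2w/n} - (n-2)/n), with n ≥ 3. Then M_n(w) ≤ Q_n(w) for all w ≥ 0. -/

import Mathlib

open Real

theorem stmt_8 (n : ℕ) (hn : 3 ≤ n) (M Q : ℝ → ℝ)
    (hM0 : M 0 = 0) (hMnn : ∀ w ≥ (0 : ℝ), 0 ≤ M w)
    (hM : ∀ w ≥ (0 : ℝ), HasDerivAt M (1 - M w ^ ((2 : ℝ) / n)) w)
    (hQ : ∀ w : ℝ, Q w =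
      (Real.exp (2 * w / n) - 1) / (Real.exp (2 * w / n) - ((n : ℝ) - 2) / n)) :
    ∀ w ≥ (0 : ℝ), M w ≤ Q w := by
  have hn3 : (3 : ℝ) ≤ (n : ℝ) := by exact_mod_cast hn
  have hnpos : (0 : ℝ) < n := by linarith
  have hnne : (n : ℝ) ≠ 0 := ne_of_gt hnpos
  set c : ℝ := ((n : ℝ) - 2) / n with hc
  have hc_pos : 0 < c := by
    rw [hc]; apply div_pos <;> linarith
  have hc_lt1 : c < 1 := by
    rw [hc, div_lt_one hnpos]; linarith
  have honec : 1 - c = 2 / (n : ℝ) := by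
    rw [hc]; field_simp; ring
  have h1c : (0 : ℝ) < 1 + c := by linarith
  -- Key algebraic inequality
  have key : ∀ q : ℝ, 0 ≤ q → q ≤ 1 →
      (1 : ℝ) ≤ q ^ ((2 : ℝ) / n) + (1 - q) * (1 - c * q) := by
    intro q hq0 hq1
    rcases eq_or_lt_of_le hq0 with h0 | h0
    · rw [← h0, Real.zero_rpow (by positivity : (2 : ℝ) / n ≠ 0)]
      norm_num
    · have amgm := Real.geom_mean_le_arith_mean2_weighted
        (by positivity : (0:ℝ) ≤ 1 / (1 + c)) (by positivity : (0:ℝ) ≤ c / (1 + c))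
        (by norm_num : (0:ℝ) ≤ 1) (Real.rpow_nonneg hq0 (1 + c))
        (by field_simp)
      rw [Real.one_rpow, one_mul, ← Real.rpow_mul hq0] at amgm
      have hcc : (1 + c) * (c / (1 + c)) = c := by field_simp
      rw [hcc] at amgm
      -- amgm : q ^ c ≤ 1 / (1+c) + c/(1+c) * q ^ (1+c)
      have hE : (1 + c) * q ^ c ≤ 1 + c * q ^ (1 + c) := by
        calc (1 + c) * q ^ c ≤ (1 + c) * (1 / (1 + c) * 1 + c / (1 + c) * q ^ (1 + c)) :=
              mul_le_mul_of_nonneg_left amgm h1c.le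
          _ = 1 + c * q ^ (1 + c) := by field_simp
      have hs1 : q ^ ((1:ℝ) - c) * q ^ c = q := by
        rw [← Real.rpow_add h0]; norm_num
      have hs2 : q ^ ((1:ℝ) - c) * q ^ ((1:ℝ) + c) = q * q := by
        rw [← Real.rpow_add h0]
        rw [show (1 : ℝ) - c + (1 + c) = ((2:ℕ) : ℝ) by push_cast; ring,
          Real.rpow_natCast]
        ring
      have ha : (0 : ℝ) ≤ q ^ ((1:ℝ) - c) := Real.rpow_nonneg hq0 _
      have h2n : q ^ ((2 : ℝ) / n) = q ^ ((1:ℝ) - c) := by rw [← honec]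
      rw [h2n]
      nlinarith [mul_le_mul_of_nonneg_left hE ha]
  -- Q values in [0,1] for w ≥ 0
  have hexp1 : ∀ w : ℝ, 0 ≤ w → (1 : ℝ) ≤ Real.exp (2 * w / n) := by
    intro w hw
    exact Real.one_le_exp (by positivity)
  have hden : ∀ w : ℝ, 0 ≤ w → 0 < Real.exp (2 * w / n) - c := by
    intro w hw
    have := hexp1 w hw
    linarith
  have hQ0 : ∀ w : ℝ, 0 ≤ w → 0 ≤ Q w := by
    intro w hw
    rw [hQ w]
    have := hexp1 w hw
    exact div_nonneg (by linarith) (hden w hw).le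
  have hQ1 : ∀ w : ℝ, 0 ≤ w → Q w ≤ 1 := by
    intro w hw
    rw [hQ w, div_le_one (hden w hw)]
    linarith
  -- derivative of Q
  have hQd : ∀ w : ℝ, 0 ≤ w → HasDerivAt Q ((1 - Q w) * (1 - c * Q w)) w := by
    intro w hw
    have hlin : HasDerivAt (fun w : ℝ => 2 * w / (n : ℝ)) (2 / n) w := by
      simpa using ((hasDerivAt_id w).const_mul (2:ℝ)).div_const (n : ℝ)
    have hExp : HasDerivAt (fun w : ℝ => Real.exp (2 * w / n))
        (Real.exp (2 * w / n) * (2 / n)) w := hlin.exp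
    have hne : Real.exp (2 * w / n) - c ≠ 0 := ne_of_gt (hden w hw)
    have hD := (hExp.sub_const 1).div (hExp.sub_const c) hne
    have hQfun : Q = fun w => (Real.exp (2 * w / n) - 1) / (Real.exp (2 * w / n) - c) :=
      funext hQ
    rw [hQfun]
    convert hD using 1
    case e'_4 => rfl
    case e'_5 => rfl
    case e'_8 => rfl
    rw [← honec]
    field_simp
    ring
  -- comparison argument
  intro w hw
  rcases eq_or_lt_of_le hw with h0 | hwpos
  · rw [← h0, hM0, hQ 0]
    simp
  · have main : ∀ ε : ℝ, 0 < ε → M w ≤ Q w + ε * w := by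
      intro ε hε
      have hQ00 : Q 0 = 0 := by rw [hQ 0]; simp
      have := image_le_of_deriv_right_lt_deriv_boundary'
        (f := M) (f' := fun x => 1 - M x ^ ((2 : ℝ) / n)) (a := 0) (b := w)
        (B := fun x => Q x + ε * x) (B' := fun x => (1 - Q x) * (1 - c * Q x) + ε)
        (fun x hx => (hM x hx.1).continuousAt.continuousWithinAt)
        (fun x hx => (hM x hx.1).hasDerivWithinAt)
        (by simp [hM0, hQ00])
        (fun x hx => ((hQd x hx.1).add
          (((hasDerivAt_id x).const_mul ε))).continuousAt.continuousWithinAt)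
        (fun x hx => by
          have h := ((hQd x hx.1).add
            ((hasDerivAt_id x).const_mul ε)).hasDerivWithinAt (s := Set.Ici x)
          rw [mul_one] at h
          exact h)
        (fun x hx hMB => by
          have hx0 : (0:ℝ) ≤ x := hx.1
          have h1 : Q x ^ ((2:ℝ)/n) ≤ M x ^ ((2:ℝ)/n) := by
            apply Real.rpow_le_rpow (hQ0 x hx0) _ (by positivity)
            rw [hMB]
            nlinarith [mul_nonneg hε.le hx0]
          have h2 := key (Q x) (hQ0 x hx0) (hQ1 x hx0)
          linarith)
      have := this (x := w) ⟨hw, le_refl w⟩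
      simpa using this
    by_contra hcon
    push_neg at hcon
    have hδ : 0 < (M w - Q w) / (2 * w) := by
      apply div_pos (by linarith) (by linarith)
    have h2 := main _ hδ
    have hterm : (M w - Q w) / (2 * w) * w = (M w - Q w) / 2 := by
      field_simp
    rw [hterm] at h2
    linarith
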